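/- Let σ be a signature, Σ a set of first-order constraints over σ, and τ: ∀x (φ(x) → ∃y ψ(x', y)) an existential rule over σ with x' ⊆ x. Introduce a fresh unary relation P_x for each variable x of x; let F be the fact φ(x) ∧ ⋀_{x ∈ x} P_x(x) and let q be the Boolean conjunctive query ∃x ∃y (φ(x) ∧ ψ(x', y) ∧ ⋀_{x ∈ x} P_x(x)). Then F ∧ Σ ⊨ q (every interpretation satisfying Σ and the existential closure of F satisfies q) iff Σ ⊨ τ (every interpretation satisfying Σ satisfies τ). Consequently, for any classes CL1 of constraints and CL2 of existential rules, the entailment problem for CL1 and CL2 reduces to the query answering problem for CL1. -/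

import Mathlib

/-- A relational signature: relation names with arities. -/
structure Sig : Type 1 where
  Rel : Type
  ar : Rel → ℕ

/-- An interpretation of a signature: a domain and, for each relation,
a set of tuples (lists of the right length). -/
structure Interp (σ : Sig) : Type 1 where
  Dom : Type
  rel : σ.Rel → Set (List Dom)
  wf : ∀ R l, l ∈ rel R → l.length = σ.ar R

/-- An atom over variables `V`. -/
structure Atom (σ : Sig) (V : Type) where
  R : σ.Rel
  args : Fin (σ.ar R) → V

/-- A conjunction of atoms over variables `V`. -/
abbrev Conj (σ : Sig) (V : Type) := List (Atom σ V)

def Atom.vmap {σ : Sig} {V W : Type} (f : V → W) (A : Atom σ V) : Atom σ W :=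
  ⟨A.R, f ∘ A.args⟩

def Conj.vmap {σ : Sig} {V W : Type} (f : V → W) (Φ : Conj σ V) : Conj σ W :=
  Φ.map (Atom.vmap f)

def satAtom {σ : Sig} (I : Interp σ) {V : Type} (ν : V → I.Dom) (A : Atom σ V) : Prop :=
  (List.ofFn fun i => ν (A.args i)) ∈ I.rel A.R

def satConj {σ : Sig} (I : Interp σ) {V : Type} (ν : V → I.Dom) (Φ : Conj σ V) : Prop :=
  ∀ A ∈ Φ, satAtom I ν A

/-- A variable occurs in an atom. -/
def occursIn {σ : Sig} {V : Type} (v : V) (A : Atom σ V) : Prop := ∃ i, A.args i = v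

/-- The Gaifman graph of a conjunction of atoms. -/
def gaifmanC {σ : Sig} {V : Type} (Φ : Conj σ V) : SimpleGraph V where
  Adj u v := u ≠ v ∧ ∃ A ∈ Φ, occursIn u A ∧ occursIn v A
  symm := by
    constructor
    intro u v h
    exact ⟨h.1.symm, by obtain ⟨A, hA, h1, h2⟩ := h.2; exact ⟨A, hA, h2, h1⟩⟩
  loopless := by constructor; intro v h; exact h.1 rfl

/-- The Gaifman graph of an interpretation. -/
def gaifmanI {σ : Sig} (I : Interp σ) : SimpleGraph I.Dom where
  Adj a b := a ≠ b ∧ ∃ R l, l ∈ I.rel R ∧ a ∈ l ∧ b ∈ l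
  symm := by
    constructor
    intro a b h
    exact ⟨h.1.symm, by obtain ⟨R, l, hl, h1, h2⟩ := h.2; exact ⟨R, l, hl, h2, h1⟩⟩
  loopless := by constructor; intro a h; exact h.1 rfl

/-- The relation names of the shredded signature. -/
inductive SRel (σ : Sig) : Type
  | low (R : σ.Rel) (h : σ.ar R ≤ 2)
  | elt
  | tag (R : σ.Rel) (h : 2 < σ.ar R)
  | proj (R : σ.Rel) (h : 2 < σ.ar R) (i : Fin (σ.ar R))

/-- The shredded signature σs. -/
def sSig (σ : Sig) : Sig where
  Rel := SRel σ
  ar := fun r => match r with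
    | .low R _ => σ.ar R
    | .elt => 1
    | .tag _ _ => 1
    | .proj _ _ _ => 2

/-- Shredding of an atom (with the fresh tuple variable `t`). -/
def shredAtom {σ : Sig} {V T : Type} (A : Atom σ V) (t : T) : Conj (sSig σ) (V ⊕ T) :=
  if h : σ.ar A.R ≤ 2 then
    [⟨SRel.low A.R h, fun i => Sum.inl (A.args i)⟩]
  else
    ⟨SRel.tag A.R (lt_of_not_ge h), fun _ => Sum.inr t⟩ ::
    (List.finRange (σ.ar A.R)).map (fun i =>
      ⟨SRel.proj A.R (lt_of_not_ge h) i,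
       fun j => if j.val = 0 then Sum.inr t else Sum.inl (A.args i)⟩)

/-- Shredding of a conjunction of atoms: one fresh variable per atom. -/
def shredConj {σ : Sig} {V : Type} (Φ : Conj σ V) : Conj (sSig σ) (V ⊕ Fin Φ.length) :=
  (List.finRange Φ.length).flatMap (fun k => shredAtom (Φ.get k) k)

/-- The fresh elements of the shredding of an interpretation: one per higher-arity tuple. -/
def HighTuple {σ : Sig} (I : Interp σ) : Type :=
  Σ R : σ.Rel, {l : List I.Dom // l ∈ I.rel R ∧ 2 < σ.ar R}

/-- The shredding of an interpretation. -/
def shredInterp {σ : Sig} (I : Interp σ) : Interp (sSig σ) where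
  Dom := I.Dom ⊕ HighTuple I
  rel := fun r => match r with
    | .low R _ => {l | ∃ l₀ ∈ I.rel R, l = l₀.map Sum.inl}
    | .elt => {l | ∃ a : I.Dom, l = [Sum.inl a]}
    | .tag R _ => {l | ∃ t : HighTuple I, t.1 = R ∧ l = [Sum.inr t]}
    | .proj R _ i => {l | ∃ t : HighTuple I, t.1 = R ∧
        ∃ a : I.Dom, t.2.val[i.val]? = some a ∧ l = [Sum.inr t, Sum.inl a]}
  wf := by
    rintro r l hl
    cases r with
    | low R h => obtain ⟨l₀, h₀, rfl⟩ := hl; simpa [sSig] using I.wf R l₀ h₀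
    | elt => obtain ⟨a, rfl⟩ := hl; rfl
    | tag R h => obtain ⟨t, _, rfl⟩ := hl; rfl
    | proj R h i => obtain ⟨t, _, a, _, rfl⟩ := hl; rfl

/-- Homomorphisms of interpretations. -/
def IsHom {σ : Sig} (I I' : Interp σ) (h : I.Dom → I'.Dom) : Prop :=
  ∀ R l, l ∈ I.rel R → l.map h ∈ I'.rel R

/-- Existential rules: body over variables `B`, head over `B ⊕ E`
(`B`-variables occurring in the head are the frontier). -/
structure ExRule (σ : Sig) : Type 1 where
  B : Type
  E : Type
  body : Conj σ B
  head : Conj σ (B ⊕ E)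

def satRule {σ : Sig} (I : Interp σ) (τ : ExRule σ) : Prop :=
  ∀ ν : τ.B → I.Dom, satConj I ν τ.body →
    ∃ μ : τ.E → I.Dom, satConj I (Sum.elim ν μ) τ.head

/-- Shredding of an existential rule. -/
def shredRule {σ : Sig} (τ : ExRule σ) : ExRule (sSig σ) where
  B := τ.B ⊕ Fin τ.body.length
  E := τ.E ⊕ Fin τ.head.length
  body := shredConj τ.body
  head := (shredConj τ.head).vmap
    (Sum.elim (Sum.elim (Sum.inl ∘ Sum.inl) (Sum.inr ∘ Sum.inl)) (fun k => Sum.inr (Sum.inr k)))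

/-- The signature σ extended with `n` fresh unary relations `P_x`,
one per universally quantified variable of the rule. -/
def addP (σ : Sig) (n : ℕ) : Sig :=
  ⟨σ.Rel ⊕ Fin n, Sum.elim σ.ar (fun _ => 1)⟩

/-- The reduct of an interpretation of the extended signature to σ. -/
def reduct {σ : Sig} {n : ℕ} (I : Interp (addP σ n)) : Interp σ where
  Dom := I.Dom
  rel := fun R => I.rel (Sum.inl R)
  wf := fun R l hl => I.wf (Sum.inl R) l hl

/-- Reading a σ-atom over the extended signature. -/
def liftAtom {σ : Sig} {n : ℕ} {V : Type} (A : Atom σ V) : Atom (addP σ n) V :=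
  ⟨Sum.inl A.R, A.args⟩

/-- for a set `Cs` of constraints over σ and an existential rule
`τ : ∀x (body(x) → ∃y head(x', y))`, with `F` the fact
`body(x) ∧ ⋀_x P_x(x)` and `q` the Boolean CQ
`∃x∃y (body(x) ∧ head(x', y) ∧ ⋀_x P_x(x))` over the signature extended with the
fresh unary relations `P_x`, we have `F ∧ Cs ⊨ q` iff `Cs ⊨ τ`.
(Consequently, entailment reduces to query answering.) -/
theorem entailment_reduces_to_QA (σ : Sig) {nb ne : ℕ}
    (body : Conj σ (Fin nb)) (head : Conj σ (Fin nb ⊕ Fin ne))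
    (Cs : Set (Interp σ → Prop)) :
    (∀ I' : Interp (addP σ nb), (∀ c ∈ Cs, c (reduct I')) →
        (∃ ν : Fin nb → I'.Dom, satConj I' ν
          ((body.map liftAtom) ++
            List.ofFn (fun x : Fin nb => (⟨Sum.inr x, fun _ => x⟩ : Atom (addP σ nb) (Fin nb))))) →
        (∃ μ : Fin nb ⊕ Fin ne → I'.Dom, satConj I' μ
          ((Conj.vmap Sum.inl (body.map liftAtom)) ++ (head.map liftAtom) ++
            List.ofFn (fun x : Fin nb =>
              (⟨Sum.inr x, fun _ => Sum.inl x⟩ : Atom (addP σ nb) (Fin nb ⊕ Fin ne))))))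
    ↔
    (∀ I : Interp σ, (∀ c ∈ Cs, c I) →
      ∀ ν : Fin nb → I.Dom, satConj I ν body →
        ∃ μ : Fin ne → I.Dom, satConj I (Sum.elim ν μ) head) := by
  constructor
  · -- QA ⊨ τ
    intro h I hCs ν hbody
    set I' : Interp (addP σ nb) :=
      ⟨I.Dom,
       fun r => match r with
         | Sum.inl R => I.rel R
         | Sum.inr x => {[ν x]},
       by
         rintro r l hl
         cases r with
         | inl R => exact I.wf R l hl
         | inr x => simp only [Set.mem_singleton_iff] at hl; subst hl; rfl⟩ with hI'
    have hred : reduct I' = I := rfl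
    obtain ⟨μ, hμ⟩ := h I' (by rw [hred]; exact hCs) ⟨ν, by
      intro A hA
      rcases List.mem_append.mp hA with hA | hA
      · obtain ⟨A₀, hA₀, rfl⟩ := List.mem_map.mp hA
        exact hbody A₀ hA₀
      · obtain ⟨x, rfl⟩ := List.mem_ofFn.mp hA
        show List.ofFn (fun _ : Fin 1 => ν x) ∈ ({[ν x]} : Set (List I.Dom))
        simp⟩
    have hfr : ∀ x : Fin nb, μ (Sum.inl x) = ν x := by
      intro x
      have := hμ ⟨Sum.inr x, fun _ => Sum.inl x⟩ (by
        apply List.mem_append.mpr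
        right
        exact List.mem_ofFn.mpr ⟨x, rfl⟩)
      have h1 : List.ofFn (fun _ : Fin 1 => μ (Sum.inl x)) ∈ ({[ν x]} : Set (List I.Dom)) := this
      simpa using h1
    refine ⟨fun y => μ (Sum.inr y), ?_⟩
    intro A hA
    have := hμ (liftAtom A) (by
      apply List.mem_append.mpr; left
      apply List.mem_append.mpr; right
      exact List.mem_map.mpr ⟨A, hA, rfl⟩)
    have h1 : List.ofFn (fun i => μ (A.args i)) ∈ I.rel A.R := this
    have : (fun i => Sum.elim ν (fun y => μ (Sum.inr y)) (A.args i))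
         = (fun i => μ (A.args i)) := by
      funext i
      cases hx : A.args i with
      | inl x => simp [hfr x]
      | inr y => simp
    show List.ofFn _ ∈ I.rel A.R
    rw [this]
    exact h1
  · -- τ entailed ⇒ QA
    intro h I' hCs ⟨ν, hν⟩
    have hbody : satConj (reduct I') ν body := by
      intro A hA
      exact hν (liftAtom A) (List.mem_append.mpr (Or.inl (List.mem_map.mpr ⟨A, hA, rfl⟩)))
    obtain ⟨μ, hμ⟩ := h (reduct I') hCs ν hbody
    refine ⟨Sum.elim ν μ, ?_⟩
    intro A hA
    rcases List.mem_append.mp hA with hA | hA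
    · rcases List.mem_append.mp hA with hA | hA
      · obtain ⟨A₀, hA₀, rfl⟩ := List.mem_map.mp hA
        obtain ⟨A₁, hA₁, rfl⟩ := List.mem_map.mp hA₀
        exact hν (liftAtom A₁) (List.mem_append.mpr (Or.inl (List.mem_map.mpr ⟨A₁, hA₁, rfl⟩)))
      · obtain ⟨A₀, hA₀, rfl⟩ := List.mem_map.mp hA
        exact hμ A₀ hA₀
    · obtain ⟨x, rfl⟩ := List.mem_ofFn.mp hA
      exact hν ⟨Sum.inr x, fun _ => x⟩ (List.mem_append.mpr (Or.inr (List.mem_ofFn.mpr ⟨x, rfl⟩)))
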